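/- Let p, q : ℝ → ℂ, let λ ∈ ℂ, and let Q(x) be the 4×4 complex companion matrix Q(x) = [[0,1,0,0],[0,0,1,0],[0,-2p(x),0,1],[λ-q(x),0,0,0]]. Let X : ℝ → Matrix (Fin 4) (Fin 4) ℂ satisfy, for every x ∈ ℝ, HasDerivAt X (Q(x)·X(x)) x, and suppose X(0) = 1 (the identity matrix). Then for every x ∈ ℝ one has X(x)ᵀ · J · X(x) = J; in particular every X(x) is invertible and X(x)⁻¹ = -J · X(x)ᵀ · J. -/

import Mathlib

open Matrix

attribute [local instance] Matrix.linftyOpNormedRing Matrix.linftyOpNormedSpace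

/-- The fixed matrix `J = [[0,0,0,1],[0,0,-1,0],[0,1,0,0],[-1,0,0,0]]`. -/
noncomputable def Jmat : Matrix (Fin 4) (Fin 4) ℂ :=
  !![0, 0, 0, 1; 0, 0, -1, 0; 0, 1, 0, 0; -1, 0, 0, 0]

attribute [local instance] Matrix.linftyOpNormedAlgebra

lemma Jmat_sq : Jmat * Jmat = -1 := by
  ext i j
  fin_cases i <;> fin_cases j <;>
    simp [Jmat, Matrix.mul_apply, Fin.sum_univ_succ, Matrix.one_apply]

/-- If `X : ℝ → Matrix (Fin 4) (Fin 4) ℂ` solves `X' = Q X` with the companion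
matrix `Q(x) = [[0,1,0,0],[0,0,1,0],[0,-2p(x),0,1],[λ-q(x),0,0,0]]` of the equation
`y'''' + 2(py')' + qy = λy`, and `X(0) = 1`, then `X(x)ᵀ·J·X(x) = J` for all `x`;
in particular every `X(x)` is invertible with `X(x)⁻¹ = -J·X(x)ᵀ·J`. -/
theorem symplectic_identity_of_fundamental_matrix
    (p q : ℝ → ℂ) (lam : ℂ)
    (Q : ℝ → Matrix (Fin 4) (Fin 4) ℂ)
    (hQ : ∀ x : ℝ, Q x =
      !![0, 1, 0, 0; 0, 0, 1, 0; 0, -2 * p x, 0, 1; lam - q x, 0, 0, 0])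
    (X : ℝ → Matrix (Fin 4) (Fin 4) ℂ)
    (hX : ∀ x : ℝ, HasDerivAt X (Q x * X x) x)
    (hX0 : X 0 = 1) :
    ∀ x : ℝ, (X x)ᵀ * Jmat * X x = Jmat ∧ IsUnit (X x).det ∧
      (X x)⁻¹ = -(Jmat * (X x)ᵀ * Jmat) := by
  have hQJ : ∀ x, (Q x)ᵀ * Jmat + Jmat * Q x = 0 := by
    intro x
    rw [hQ]
    ext i j
    fin_cases i <;> fin_cases j <;>
      simp [Jmat, Matrix.mul_apply, Fin.sum_univ_succ, Matrix.vecHead, Matrix.vecTail]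
  -- transpose as a continuous linear map
  let T : Matrix (Fin 4) (Fin 4) ℂ →L[ℝ] Matrix (Fin 4) (Fin 4) ℂ :=
    LinearMap.toContinuousLinearMap
      ((Matrix.transposeLinearEquiv (Fin 4) (Fin 4) ℝ ℂ).toLinearMap)
  have hT : ∀ A, T A = Aᵀ := fun A => rfl
  have hXT : ∀ x, HasDerivAt (fun y => (X y)ᵀ) ((Q x * X x)ᵀ) x := by
    intro x
    have := (T.hasFDerivAt (x := X x)).comp_hasDerivAt x (hX x)
    exact this
  set F : ℝ → Matrix (Fin 4) (Fin 4) ℂ := fun y => (X y)ᵀ * Jmat * X y with hF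
  have hF' : ∀ x, HasDerivAt F 0 x := by
    intro x
    have h1 : HasDerivAt (fun y => (X y)ᵀ * Jmat) ((Q x * X x)ᵀ * Jmat) x := by
      exact (hXT x).mul_const Jmat
    have h2 := h1.mul (hX x)
    have h3 : (X x)ᵀ * (Q x)ᵀ * Jmat * X x + (X x)ᵀ * Jmat * (Q x * X x) = 0 := by
      have : (X x)ᵀ * (((Q x)ᵀ * Jmat + Jmat * Q x) * X x) = 0 := by
        rw [hQJ x]; simp
      calc (X x)ᵀ * (Q x)ᵀ * Jmat * X x + (X x)ᵀ * Jmat * (Q x * X x)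
          = (X x)ᵀ * (((Q x)ᵀ * Jmat + Jmat * Q x) * X x) := by
            noncomm_ring
        _ = 0 := this
    simp [h3] at h2
    exact h2
  have hconst : ∀ x, F x = F 0 := by
    intro x
    exact is_const_of_deriv_eq_zero (fun y => (hF' y).differentiableAt)
      (fun y => (hF' y).deriv) x 0
  have hJ : ∀ x, (X x)ᵀ * Jmat * X x = Jmat := by
    intro x
    have := hconst x
    simpa [hF, hX0] using this
  intro x
  have hleft : (-(Jmat * (X x)ᵀ * Jmat)) * X x = 1 := by
    have : Jmat * ((X x)ᵀ * Jmat * X x) = Jmat * Jmat := by rw [hJ x]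
    calc (-(Jmat * (X x)ᵀ * Jmat)) * X x
        = -(Jmat * ((X x)ᵀ * Jmat * X x)) := by noncomm_ring
      _ = -(Jmat * Jmat) := by rw [this]
      _ = 1 := by rw [Jmat_sq]; simp
  exact ⟨hJ x, Matrix.isUnit_det_of_left_inverse hleft, Matrix.inv_eq_left_inv hleft⟩
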